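/- Let $S$ be a semigroup such that for every injective sequence $(a_n)$ and every finite coloring of $S$ there is an injective sumsequence $(b_n)$ of $(a_n)$ with $FS(b_n)$ monochromatic. Then the family of proper IP sets in $S$ is partition regular: for every finite partition of a proper IP set, some part is a proper IP set. -/

import Mathlib

/-- The ordered sum `a_{i_1} + ⋯ + a_{i_m}` over a finite index set
`F = {i_1 < ⋯ < i_m}` (junk value `a 0` if `F = ∅`). -/
def ordsum {S : Type*} [AddSemigroup S] (a : ℕ → S) (F : Finset ℕ) : S :=
  match F.sort (· ≤ ·) with
  | [] => a 0
  | i :: l => l.foldl (fun s j => s + a j) (a i)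

/-- `F < G`: every element of `F` is smaller than every element of `G`. -/
def FinsetLT (F G : Finset ℕ) : Prop := ∀ i ∈ F, ∀ j ∈ G, i < j

/-- `FS(a_1, a_2, …)`: the set of all finite ordered sums of the sequence `a`. -/
def FSset {S : Type*} [AddSemigroup S] (a : ℕ → S) : Set S :=
  {s | ∃ F : Finset ℕ, F.Nonempty ∧ ordsum a F = s}

/-- `FS(a_n, a_{n+1}, …)`: finite ordered sums with all indices `≥ n`. -/
def FStail {S : Type*} [AddSemigroup S] (a : ℕ → S) (n : ℕ) : Set S :=
  {s | ∃ F : Finset ℕ, F.Nonempty ∧ (∀ i ∈ F, n ≤ i) ∧ ordsum a F = s}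

/-- A sequence is proper if `a_{F₁} ≠ a_{F₂}` whenever `F₁ < F₂`. -/
def IsProperSeq {S : Type*} [AddSemigroup S] (a : ℕ → S) : Prop :=
  ∀ F G : Finset ℕ, F.Nonempty → G.Nonempty → FinsetLT F G →
    ordsum a F ≠ ordsum a G

/-- `b` is a sumsequence of `a`: `b_k = a_{F_k}` for finite index sets `F₁ < F₂ < ⋯`. -/
def IsSumseq {S : Type*} [AddSemigroup S] (a b : ℕ → S) : Prop :=
  ∃ F : ℕ → Finset ℕ, (∀ k, (F k).Nonempty) ∧
    (∀ k, FinsetLT (F k) (F (k + 1))) ∧ (∀ k, b k = ordsum a (F k))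


/-- A proper IP set: contains `FS(b)` for an injective sequence `b`. -/
def IsProperIP {S : Type*} [AddSemigroup S] (A : Set S) : Prop :=
  ∃ b : ℕ → S, Function.Injective b ∧ FSset b ⊆ A

/-- Partition regularity of the family of proper IP sets of `S`. -/
def ProperIPPartReg (S : Type*) [AddSemigroup S] : Prop :=
  ∀ A : Set S, IsProperIP A → ∀ (k : ℕ) (c : S → Fin k),
    ∃ i : Fin k, IsProperIP {s ∈ A | c s = i}

/-- `FS(b_0, …, b_{n-1})`: ordered sums over nonempty `F ⊆ {0, …, n-1}`. -/
def FSfin {S : Type*} [AddSemigroup S] (a : ℕ → S) (n : ℕ) : Set S :=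
  {s | ∃ F : Finset ℕ, F.Nonempty ∧ F ⊆ Finset.range n ∧ ordsum a F = s}

/-- `FS_{≥2}(a)`: ordered sums with at least two summands. -/
def FS2set {S : Type*} [AddSemigroup S] (a : ℕ → S) : Set S :=
  {s | ∃ F : Finset ℕ, 2 ≤ F.card ∧ ordsum a F = s}


private lemma sort_union_of_lt {F G : Finset ℕ} (h : FinsetLT F G) :
    (F ∪ G).sort (· ≤ ·) = F.sort (· ≤ ·) ++ G.sort (· ≤ ·) := by
  apply fun hp h1 h2 => List.Perm.eq_of_pairwise' (r := ((· ≤ ·) : ℕ → ℕ → Prop)) h1 h2 hp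
  · apply List.perm_of_nodup_nodup_toFinset_eq (Finset.sort_nodup _ _)
    · rw [List.nodup_append]
      refine ⟨Finset.sort_nodup _ _, Finset.sort_nodup _ _, ?_⟩
      intro x hx y hy
      exact ne_of_lt (h x (by simpa using hx) y (by simpa using hy))
    · simp [List.toFinset_append, Finset.sort_toFinset]
  · exact Finset.pairwise_sort _ _
  · rw [List.pairwise_append]
    refine ⟨Finset.pairwise_sort _ _, Finset.pairwise_sort _ _, ?_⟩
    intro x hx y hy
    exact (h x (by simpa using hx) y (by simpa using hy)).le

private lemma foldl_add {S : Type*} [AddSemigroup S] (a : ℕ → S) (x y : S) (l : List ℕ) :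
    l.foldl (fun s j => s + a j) (x + y) = x + l.foldl (fun s j => s + a j) y := by
  induction l generalizing y with
  | nil => rfl
  | cons j l ih => simp only [List.foldl_cons, add_assoc]; exact ih _

private lemma ordsum_union {S : Type*} [AddSemigroup S] (a : ℕ → S) {F G : Finset ℕ}
    (hF : F.Nonempty) (hG : G.Nonempty) (h : FinsetLT F G) :
    ordsum a (F ∪ G) = ordsum a F + ordsum a G := by
  obtain ⟨i, l, hFl⟩ := List.exists_cons_of_ne_nil (l := F.sort (· ≤ ·)) (by
    intro hl
    have := Finset.length_sort (α := ℕ) (· ≤ ·) (s := F)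
    rw [hl] at this
    simp [Finset.card_eq_zero.mp this.symm] at hF)
  obtain ⟨j, m, hGm⟩ := List.exists_cons_of_ne_nil (l := G.sort (· ≤ ·)) (by
    intro hl
    have := Finset.length_sort (α := ℕ) (· ≤ ·) (s := G)
    rw [hl] at this
    simp [Finset.card_eq_zero.mp this.symm] at hG)
  have hu := sort_union_of_lt h
  rw [hFl, hGm] at hu
  simp only [ordsum, hu, hFl, hGm, List.cons_append]
  rw [List.foldl_append, List.foldl_cons, foldl_add]

private lemma ordsum_singleton {S : Type*} [AddSemigroup S] (a : ℕ → S) (k : ℕ) :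
    ordsum a {k} = a k := by
  simp [ordsum, Finset.sort_singleton]

private lemma finsetLT_trans (F : ℕ → Finset ℕ) (hne : ∀ k, (F k).Nonempty)
    (hlt : ∀ k, FinsetLT (F k) (F (k + 1))) :
    ∀ k l : ℕ, k < l → FinsetLT (F k) (F l) := by
  intro k l hkl
  induction l with
  | zero => omega
  | succ l ih =>
    rcases Nat.lt_succ_iff_lt_or_eq.mp hkl with h | h
    · intro i hi j hj
      obtain ⟨x, hx⟩ := hne l
      exact (ih h i hi x hx).trans (hlt l x hx j hj)
    · subst h; exact hlt k

private lemma ordsum_sumseq {S : Type*} [AddSemigroup S] (a b : ℕ → S)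
    (F : ℕ → Finset ℕ) (hne : ∀ k, (F k).Nonempty)
    (hlt : ∀ k, FinsetLT (F k) (F (k + 1))) (hb : ∀ k, b k = ordsum a (F k)) :
    ∀ K : Finset ℕ, K.Nonempty → ordsum b K = ordsum a (K.biUnion F) := by
  have hmono := finsetLT_trans F hne hlt
  intro K
  induction K using Finset.induction_on_max with
  | empty => intro h; simp at h
  | insert m K hm ih =>
    intro _
    rcases K.eq_empty_or_nonempty with rfl | hK
    · simp [ordsum_singleton, hb]
    · have hKm : m ∉ K := fun h => lt_irrefl m (hm m h)
      have hins : insert m K = K ∪ {m} := by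
        rw [Finset.union_comm]; exact Finset.insert_eq m K
      have hU : (K ∪ {m}).biUnion F = K.biUnion F ∪ F m := by
        rw [← hins, Finset.biUnion_insert]; exact Finset.union_comm _ _
      have hLTb : FinsetLT (K.biUnion F) (F m) := by
        intro i hi j hj
        obtain ⟨x, hx, hxi⟩ := Finset.mem_biUnion.mp hi
        exact hmono _ _ (hm x hx) i hxi j hj
      have hLTK : FinsetLT K {m} := by
        intro i hi j hj
        simp only [Finset.mem_singleton] at hj
        subst hj; exact hm i hi
      have hbne : (K.biUnion F).Nonempty := by
        obtain ⟨x, hx⟩ := hK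
        obtain ⟨y, hy⟩ := hne x
        exact ⟨y, Finset.mem_biUnion.mpr ⟨x, hx, hy⟩⟩
      rw [hins, ordsum_union b hK (Finset.singleton_nonempty m) hLTK,
        ih hK, ordsum_singleton, hb, hU,
        ordsum_union a hbne (hne m) hLTb]

private lemma FSset_sumseq_subset {S : Type*} [AddSemigroup S] {a b : ℕ → S}
    (h : IsSumseq a b) : FSset b ⊆ FSset a := by
  obtain ⟨F, hne, hlt, hb⟩ := h
  rintro s ⟨K, hK, rfl⟩
  refine ⟨K.biUnion F, ?_, (ordsum_sumseq a b F hne hlt hb K hK).symm⟩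
  obtain ⟨x, hx⟩ := hK
  obtain ⟨y, hy⟩ := hne x
  exact ⟨y, Finset.mem_biUnion.mpr ⟨x, hx, hy⟩⟩


theorem stmt14 {S : Type*} [AddSemigroup S]
    (H : ∀ a : ℕ → S, Function.Injective a → ∀ (k : ℕ) (c : S → Fin k),
      ∃ b : ℕ → S, IsSumseq a b ∧ Function.Injective b ∧
        ∃ i : Fin k, ∀ s ∈ FSset b, c s = i) :
    ∀ A : Set S, IsProperIP A → ∀ (k : ℕ) (c : S → Fin k),
      ∃ i : Fin k, IsProperIP {s ∈ A | c s = i} := by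
  intro A hA k c
  obtain ⟨a, ha, hFA⟩ := hA
  obtain ⟨b, hsum, hinj, i, hi⟩ := H a ha k c
  refine ⟨i, b, hinj, fun s hs => ?_⟩
  exact ⟨hFA (FSset_sumseq_subset hsum hs), hi s hs⟩
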